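/- arXiv:2602.13995 — 5 statements merged into one kernel-verified Lean document; each statement's English description precedes it below -/
import Mathlib

section
/- For every integer k ≥ 3 and every real number θ, define g(θ) = (k/(2(k+2)²))·sin((k+2)θ) − ((k−2)/(2k²))·sin(kθ), so that g′(θ) = (k/(2(k+2)))·cos((k+2)θ) − ((k−2)/(2k))·cos(kθ). Then 2·g(θ)·cos(2θ) − sin(2θ)·g′(θ) = −d⁺_{k+2}·e_{k+2}(θ) + (d⁺_k − d⁺_{k+2})·e_k(θ) + d⁺_k·e_{k−2}(θ). -/
open Real

/-- The weighted basis function `e_j(θ) = sin((j+2)θ)/(j+2) − sin(jθ)/j`. -/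
noncomputable def eBasis (j : ℕ) (θ : ℝ) : ℝ :=
  sin (((j : ℝ) + 2) * θ) / ((j : ℝ) + 2) - sin ((j : ℝ) * θ) / (j : ℝ)

/-- The tridiagonal coefficient `d⁺_j = (j−2)²·(j+2)/(4j²)`. -/
noncomputable def dPlus (j : ℕ) : ℝ :=
  ((j : ℝ) - 2) ^ 2 * ((j : ℝ) + 2) / (4 * (j : ℝ) ^ 2)

/-- Tridiagonal action of the linearized operator `L⁺` on the basis function `e_k`:
with `g = e_k/2 + v_k`, one has
`{g, sin 2θ} = −d⁺_{k+2}·e_{k+2} + (d⁺_k − d⁺_{k+2})·e_k + d⁺_k·e_{k−2}`. -/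
theorem lplus_eBasis (k : ℕ) (hk : 3 ≤ k) (θ : ℝ) :
    2 * ((k : ℝ) / (2 * ((k : ℝ) + 2) ^ 2) * sin (((k : ℝ) + 2) * θ) -
          ((k : ℝ) - 2) / (2 * (k : ℝ) ^ 2) * sin ((k : ℝ) * θ)) * cos (2 * θ) -
      sin (2 * θ) * ((k : ℝ) / (2 * ((k : ℝ) + 2)) * cos (((k : ℝ) + 2) * θ) -
          ((k : ℝ) - 2) / (2 * (k : ℝ)) * cos ((k : ℝ) * θ)) =
    -(dPlus (k + 2)) * eBasis (k + 2) θ + (dPlus k - dPlus (k + 2)) * eBasis k θ +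
      dPlus k * eBasis (k - 2) θ := by

  have hk2 : (2:ℕ) ≤ k := by omega
  have hn3 : (3:ℝ) ≤ (k:ℝ) := by exact_mod_cast hk
  have hn0 : (k:ℝ) ≠ 0 := by linarith
  have hn2 : (k:ℝ) - 2 ≠ 0 := by linarith
  have hp2 : (k:ℝ) + 2 ≠ 0 := by linarith
  have hp4 : (k:ℝ) + 4 ≠ 0 := by linarith
  unfold eBasis dPlus
  push_cast [Nat.cast_sub hk2]
  rw [show ((k:ℝ)+2+2)*θ = (k:ℝ)*θ+2*θ+2*θ by ring,
      show ((k:ℝ)+2)*θ = (k:ℝ)*θ+2*θ by ring,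
      show ((k:ℝ)-2+2)*θ = (k:ℝ)*θ by ring,
      show ((k:ℝ)-2)*θ = (k:ℝ)*θ-2*θ by ring]
  have ha : sin (θ*2)^2 = 1 - cos (θ*2)^2 := by
    have := sin_sq_add_cos_sq (θ*2); linarith
  simp only [sin_add, cos_add, sin_sub, cos_sub]
  field_simp
  ring_nf
  rw [ha]
  field_simp
  ring
end

section
/- Let x₀ < x₁ be real numbers and let p₁, p₂, q : [x₀, x₁] → ℝ be continuous. Let y, φ : [x₀, x₁] → ℝ be twice continuously differentiable with y″(x) = p₁(x)·y′(x) + p₂(x)·y(x) + q(x) for all x ∈ [x₀, x₁], φ″(x) > p₁(x)·φ′(x) + p₂(x)·φ(x) + q(x) for all x ∈ [x₀, x₁], φ(x₀) = y(x₀), and φ′(x₀) = y′(x₀). Suppose moreover that there is a twice continuously differentiable u : [x₀, x₁] → ℝ with u″(x) = p₁(x)·u′(x) + p₂(x)·u(x) on [x₀, x₁], u(x₀) = 0, u′(x₀) = 1, and u(x) > 0 for all x with x₀ < x ≤ x₁. Then φ(x) > y(x) for all x with x₀ < x ≤ x₁. -/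
open Set

private lemma deriv_pos_aux {a b : ℝ} (hab : a < b) {f f' : ℝ → ℝ}
    (hf : ContinuousOn f (Icc a b))
    (hf' : ∀ t ∈ Ioo a b, HasDerivWithinAt f (f' t) (Ioo a b) t)
    (hpos : ∀ t ∈ Ioo a b, 0 < f' t) (h0 : f a = 0) :
    ∀ t ∈ Ioc a b, 0 < f t := by
  have hmono : StrictMonoOn f (Icc a b) :=
    strictMonoOn_of_hasDerivWithinAt_pos (convex_Icc a b) hf
      (by rw [interior_Icc]; exact hf') (by rw [interior_Icc]; exact hpos)
  intro t ht
  have := hmono ⟨le_refl a, hab.le⟩ ⟨ht.1.le, ht.2⟩ ht.1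
  rwa [h0] at this

/-- Comparison theorem for second-order linear ODEs: if `y″ = p₁y′ + p₂y + q` on `[x₀,x₁]`,
`φ″ > p₁φ′ + p₂φ + q` on `[x₀,x₁]`, `φ` and `y` share initial data at `x₀`, and the
homogeneous equation is disconjugate on `(x₀, x₁]` (witnessed by `u` with `u(x₀)=0`,
`u′(x₀)=1`, `u > 0` on `(x₀, x₁]`), then `φ > y` on `(x₀, x₁]`. -/
theorem second_order_comparison
    (x₀ x₁ : ℝ) (hx : x₀ < x₁)
    (p₁ p₂ q : ℝ → ℝ)
    (hp₁ : ContinuousOn p₁ (Icc x₀ x₁)) (hp₂ : ContinuousOn p₂ (Icc x₀ x₁))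
    (hq : ContinuousOn q (Icc x₀ x₁))
    (y y' y'' φ φ' φ'' u u' u'' : ℝ → ℝ)
    (hy1 : ∀ x ∈ Icc x₀ x₁, HasDerivWithinAt y (y' x) (Icc x₀ x₁) x)
    (hy2 : ∀ x ∈ Icc x₀ x₁, HasDerivWithinAt y' (y'' x) (Icc x₀ x₁) x)
    (hy3 : ContinuousOn y'' (Icc x₀ x₁))
    (hφ1 : ∀ x ∈ Icc x₀ x₁, HasDerivWithinAt φ (φ' x) (Icc x₀ x₁) x)
    (hφ2 : ∀ x ∈ Icc x₀ x₁, HasDerivWithinAt φ' (φ'' x) (Icc x₀ x₁) x)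
    (hφ3 : ContinuousOn φ'' (Icc x₀ x₁))
    (hu1 : ∀ x ∈ Icc x₀ x₁, HasDerivWithinAt u (u' x) (Icc x₀ x₁) x)
    (hu2 : ∀ x ∈ Icc x₀ x₁, HasDerivWithinAt u' (u'' x) (Icc x₀ x₁) x)
    (hu3 : ContinuousOn u'' (Icc x₀ x₁))
    (hyODE : ∀ x ∈ Icc x₀ x₁, y'' x = p₁ x * y' x + p₂ x * y x + q x)
    (hφineq : ∀ x ∈ Icc x₀ x₁, φ'' x > p₁ x * φ' x + p₂ x * φ x + q x)
    (hφ0 : φ x₀ = y x₀) (hφ'0 : φ' x₀ = y' x₀)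
    (huODE : ∀ x ∈ Icc x₀ x₁, u'' x = p₁ x * u' x + p₂ x * u x)
    (hu0 : u x₀ = 0) (hu'0 : u' x₀ = 1)
    (hupos : ∀ x, x₀ < x → x ≤ x₁ → 0 < u x) :
    ∀ x, x₀ < x → x ≤ x₁ → y x < φ x := by
  have hx0S : x₀ ∈ Icc x₀ x₁ := ⟨le_refl _, hx.le⟩
  -- continuity of the basic functions
  have hyc : ContinuousOn y (Icc x₀ x₁) := fun t m => (hy1 t m).continuousWithinAt
  have hy'c : ContinuousOn y' (Icc x₀ x₁) := fun t m => (hy2 t m).continuousWithinAt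
  have hφc : ContinuousOn φ (Icc x₀ x₁) := fun t m => (hφ1 t m).continuousWithinAt
  have hφ'c : ContinuousOn φ' (Icc x₀ x₁) := fun t m => (hφ2 t m).continuousWithinAt
  have huc : ContinuousOn u (Icc x₀ x₁) := fun t m => (hu1 t m).continuousWithinAt
  have hu'c : ContinuousOn u' (Icc x₀ x₁) := fun t m => (hu2 t m).continuousWithinAt
  -- the "forcing" term is positive
  have hg : ∀ t ∈ Icc x₀ x₁,
      0 < (φ'' t - y'' t) - p₁ t * (φ' t - y' t) - p₂ t * (φ t - y t) := by
    intro t m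
    have h1 := hφineq t m
    have h2 := hyODE t m
    nlinarith [h1, h2]
  -- an antiderivative of (an extension of) p₁
  have hP₁cont : Continuous (fun t => p₁ (projIcc x₀ x₁ hx.le t)) :=
    hp₁.comp_continuous (continuous_subtype_val.comp continuous_projIcc)
      fun t => (projIcc x₀ x₁ hx.le t).2
  have hP₁eq : ∀ t ∈ Icc x₀ x₁, p₁ (projIcc x₀ x₁ hx.le t : Icc x₀ x₁) = p₁ t := by
    intro t m
    rw [projIcc_of_mem hx.le m]
  have hPd : ∀ t : ℝ, HasDerivAt (fun s => ∫ r in x₀..s, p₁ (projIcc x₀ x₁ hx.le r))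
      (p₁ (projIcc x₀ x₁ hx.le t)) t := fun t =>
    intervalIntegral.integral_hasDerivAt_right (hP₁cont.intervalIntegrable _ _)
      (hP₁cont.stronglyMeasurableAtFilter _ _) hP₁cont.continuousAt
  have hPc : Continuous (fun s => ∫ r in x₀..s, p₁ (projIcc x₀ x₁ hx.le r)) :=
    continuous_iff_continuousAt.mpr fun t => (hPd t).continuousAt
  -- the Wronskian-type function V = (u w' - u' w) e^{-P}
  have hVd : ∀ t ∈ Icc x₀ x₁, HasDerivWithinAt
      (fun s => (u s * (φ' s - y' s) - u' s * (φ s - y s)) *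
        Real.exp (-(∫ r in x₀..s, p₁ (projIcc x₀ x₁ hx.le r))))
      ((u t * ((φ'' t - y'' t) - p₁ t * (φ' t - y' t) - p₂ t * (φ t - y t))) *
        Real.exp (-(∫ r in x₀..t, p₁ (projIcc x₀ x₁ hx.le r)))) (Icc x₀ x₁) t := by
    intro t m
    have hW : HasDerivWithinAt (fun s => u s * (φ' s - y' s) - u' s * (φ s - y s))
        (u' t * (φ' t - y' t) + u t * (φ'' t - y'' t) -
          (u'' t * (φ t - y t) + u' t * (φ' t - y' t))) (Icc x₀ x₁) t :=
      ((hu1 t m).mul ((hφ2 t m).sub (hy2 t m))).sub ((hu2 t m).mul ((hφ1 t m).sub (hy1 t m)))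
    have hE : HasDerivAt (fun s => Real.exp (-(∫ r in x₀..s, p₁ (projIcc x₀ x₁ hx.le r))))
        (Real.exp (-(∫ r in x₀..t, p₁ (projIcc x₀ x₁ hx.le r))) *
          (-(p₁ (projIcc x₀ x₁ hx.le t)))) t := ((hPd t).neg).exp
    have h := hW.mul hE.hasDerivWithinAt
    refine h.congr_deriv ?_
    rw [hP₁eq t m, huODE t m]
    ring
  have hVc : ContinuousOn (fun s => (u s * (φ' s - y' s) - u' s * (φ s - y s)) *
      Real.exp (-(∫ r in x₀..s, p₁ (projIcc x₀ x₁ hx.le r)))) (Icc x₀ x₁) :=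
    ((huc.mul (hφ'c.sub hy'c)).sub (hu'c.mul (hφc.sub hyc))).mul
      ((Real.continuous_exp.comp hPc.neg).continuousOn)
  -- the Wronskian-type quantity is positive on (x₀, x₁]
  have hWpos : ∀ t, x₀ < t → t ≤ x₁ → 0 < u t * (φ' t - y' t) - u' t * (φ t - y t) := by
    intro t ht0 ht1
    have hsub : Icc x₀ t ⊆ Icc x₀ x₁ := Icc_subset_Icc le_rfl ht1
    have hsub' : Ioo x₀ t ⊆ Icc x₀ x₁ := Ioo_subset_Icc_self.trans hsub
    have hVpos := deriv_pos_aux ht0 (hVc.mono hsub)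
      (fun s hs => (hVd s (hsub' hs)).mono hsub')
      (fun s hs => mul_pos (mul_pos (hupos s hs.1 (hs.2.le.trans ht1)) (hg s (hsub' hs)))
        (Real.exp_pos _))
      (by simp [hu0, hφ0])
    have h := hVpos t ⟨ht0, le_rfl⟩
    have he := Real.exp_pos (-(∫ r in x₀..t, p₁ (projIcc x₀ x₁ hx.le r)))
    nlinarith [h, he]
  -- near x₀ : φ - y is positive on (x₀, c]
  have hw''0 : 0 < φ'' x₀ - y'' x₀ := by
    have h1 := hφineq x₀ hx0S
    have h2 := hyODE x₀ hx0S
    rw [hφ0, hφ'0] at h1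
    linarith
  have hev : {t | 0 < φ'' t - y'' t} ∈ nhdsWithin x₀ (Ici x₀) := by
    rw [← nhdsWithin_Icc_eq_nhdsGE hx]
    exact ((hφ3.sub hy3) x₀ hx0S).eventually (eventually_gt_nhds hw''0)
  obtain ⟨b, hb, hbsub⟩ := mem_nhdsGE_iff_exists_Icc_subset.mp hev
  set c := min b x₁ with hc
  have hc0 : x₀ < c := lt_min hb hx
  have hc1 : c ≤ x₁ := min_le_right _ _
  have hcsub : Icc x₀ c ⊆ Icc x₀ x₁ := Icc_subset_Icc le_rfl hc1
  have hcsub' : Ioo x₀ c ⊆ Icc x₀ x₁ := Ioo_subset_Icc_self.trans hcsub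
  have hw''pos : ∀ t ∈ Icc x₀ c, 0 < φ'' t - y'' t := fun t m =>
    hbsub ⟨m.1, m.2.trans (min_le_left _ _)⟩
  have hw'pos : ∀ t ∈ Ioc x₀ c, 0 < φ' t - y' t :=
    deriv_pos_aux hc0 ((hφ'c.sub hy'c).mono hcsub)
      (fun t ht => (((hφ2 t (hcsub' ht)).sub (hy2 t (hcsub' ht))).mono hcsub'))
      (fun t ht => hw''pos t (Ioo_subset_Icc_self ht))
      (by simp [hφ'0])
  have hwposc : ∀ t ∈ Ioc x₀ c, 0 < φ t - y t :=
    deriv_pos_aux hc0 ((hφc.sub hyc).mono hcsub)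
      (fun t ht => (((hφ1 t (hcsub' ht)).sub (hy1 t (hcsub' ht))).mono hcsub'))
      (fun t ht => hw'pos t ⟨ht.1, ht.2.le⟩)
      (by simp [hφ0])
  -- conclusion
  intro x hx0' hx1'
  rcases le_or_gt x c with hxc | hcx
  · have := hwposc x ⟨hx0', hxc⟩
    linarith
  · have hsub2 : Icc c x ⊆ Icc x₀ x₁ := Icc_subset_Icc hc0.le hx1'
    have hsub2' : Ioo c x ⊆ Icc x₀ x₁ := Ioo_subset_Icc_self.trans hsub2
    have hune : ∀ t ∈ Icc c x, 0 < u t := fun t m =>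
      hupos t (hc0.trans_le m.1) (m.2.trans hx1')
    have key := deriv_pos_aux (a := c) (b := x) hcx
      (f := fun t => (φ t - y t) / u t - (φ c - y c) / u c)
      (f' := fun t => ((φ' t - y' t) * u t - (φ t - y t) * u' t) / (u t) ^ 2)
      ((((hφc.sub hyc).mono hsub2).div (huc.mono hsub2)
        (fun t m => (hune t m).ne')).sub continuousOn_const)
      (fun t ht => ((((hφ1 t (hsub2' ht)).sub (hy1 t (hsub2' ht))).div (hu1 t (hsub2' ht))
          (hune t (Ioo_subset_Icc_self ht)).ne').sub_const _).mono hsub2')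
      (fun t ht => by
        have hut : 0 < u t := hune t (Ioo_subset_Icc_self ht)
        have hWt := hWpos t (hc0.trans ht.1) (ht.2.le.trans hx1')
        apply div_pos _ (pow_pos hut 2)
        linarith [hWt])
      (by simp)
    have hrx := key x ⟨hcx, le_rfl⟩
    have hwc : 0 < φ c - y c := hwposc c ⟨hc0, le_rfl⟩
    have huc0 : 0 < u c := hupos c hc0 hc1
    have hrc : 0 < (φ c - y c) / u c := div_pos hwc huc0
    have hux : 0 < u x := hupos x hx0' hx1'
    have hrxpos : 0 < (φ x - y x) / u x := by linarith
    rcases div_pos_iff.mp hrxpos with ⟨h1, _⟩ | ⟨_, h2⟩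
    · linarith
    · linarith
end

section
/- There exists a constant C > 0 such that the following holds: for every continuously differentiable, odd, 2π-periodic function f : ℝ → ℝ with f(0) = f(π) = 0 for which the function ϑ ↦ (f′(ϑ)/sin ϑ)² is integrable on (−π, π), one has, for every θ ∈ ℝ with sin θ ≠ 0, |f(θ)/sin θ| ≤ C·(∫_{−π}^{π} (f′(ϑ)/sin ϑ)² dϑ)^{1/2}. -/
open Real MeasureTheory

private lemma rpow_two_abs (y : ℝ) : |y| ^ (2:ℝ) = y ^ 2 := by
  rw [show (2:ℝ) = ((2:ℕ):ℝ) by norm_num, Real.rpow_natCast, sq_abs]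

/-- Cauchy–Schwarz for real integrals. -/
private lemma my_cs {μ : Measure ℝ} {g h : ℝ → ℝ}
    (hg : MemLp g 2 μ) (hh : MemLp h 2 μ) :
    |∫ x, g x * h x ∂μ| ≤ Real.sqrt (∫ x, g x ^ 2 ∂μ) * Real.sqrt (∫ x, h x ^ 2 ∂μ) := by
  have h2 : ENNReal.ofReal (2:ℝ) = 2 := by norm_num
  have hpq : Real.HolderConjugate 2 2 := Real.HolderConjugate.two_two
  have hg' : MemLp g (ENNReal.ofReal (2:ℝ)) μ := by rwa [h2]
  have hh' : MemLp h (ENNReal.ofReal (2:ℝ)) μ := by rwa [h2]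
  have key := MeasureTheory.integral_mul_norm_le_Lp_mul_Lq hpq hg' hh'
  have habs : |∫ x, g x * h x ∂μ| ≤ ∫ x, ‖g x‖ * ‖h x‖ ∂μ := by
    have h1 : ‖∫ x, g x * h x ∂μ‖ ≤ ∫ x, ‖g x * h x‖ ∂μ :=
      norm_integral_le_integral_norm _
    simpa [Real.norm_eq_abs, abs_mul] using h1
  refine habs.trans (key.trans_eq ?_)
  have e1 : ∫ x, ‖g x‖ ^ (2:ℝ) ∂μ = ∫ x, g x ^ 2 ∂μ := by
    refine integral_congr_ae (Filter.Eventually.of_forall fun x => ?_)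
    show ‖g x‖ ^ (2:ℝ) = g x ^ 2
    rw [Real.norm_eq_abs, rpow_two_abs]
  have e2 : ∫ x, ‖h x‖ ^ (2:ℝ) ∂μ = ∫ x, h x ^ 2 ∂μ := by
    refine integral_congr_ae (Filter.Eventually.of_forall fun x => ?_)
    show ‖h x‖ ^ (2:ℝ) = h x ^ 2
    rw [Real.norm_eq_abs, rpow_two_abs]
  rw [e1, e2, Real.sqrt_eq_rpow, Real.sqrt_eq_rpow]

/-- Segment estimate: on an interval where `sin` is positive and bounded by `sin θ`,
the integral of `f'` is controlled. -/
private lemma hardy_seg (f' : ℝ → ℝ) (hcont : Continuous f') {a b θ : ℝ}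
    (hab : a ≤ b) (hba : b - a ≤ π) (hsub : Set.Ioo a b ⊆ Set.Ioo (-π) π)
    (hθnn : 0 ≤ Real.sin θ)
    (hsin : ∀ t ∈ Set.Ioo a b, 0 < Real.sin t ∧ Real.sin t ≤ Real.sin θ)
    (hint : IntegrableOn (fun ϑ => (f' ϑ / Real.sin ϑ) ^ 2) (Set.Ioo (-π) π)) :
    |∫ t in Set.Ioo a b, f' t| ≤
      Real.sqrt π * Real.sin θ *
        Real.sqrt (∫ ϑ in Set.Ioo (-π) π, (f' ϑ / Real.sin ϑ) ^ 2) := by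
  set I := ∫ ϑ in Set.Ioo (-π) π, (f' ϑ / Real.sin ϑ) ^ 2 with hIdef
  set μ := volume.restrict (Set.Ioo a b) with hμdef
  -- rewrite integrand
  have hcong : ∫ t in Set.Ioo a b, f' t =
      ∫ t in Set.Ioo a b, Real.sin t * (f' t / Real.sin t) := by
    refine setIntegral_congr_fun measurableSet_Ioo (fun t ht => ?_)
    have hs : Real.sin t ≠ 0 := ne_of_gt (hsin t ht).1
    field_simp
  -- MemLp facts
  have hsin2int : IntegrableOn (fun t => Real.sin t ^ 2) (Set.Ioo a b) := by
    have h1 : IntegrableOn (fun t => Real.sin t ^ 2) (Set.Icc a b) volume :=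
      (continuous_sin.pow 2).integrableOn_Icc
    exact h1.mono_set Set.Ioo_subset_Icc_self
  have hgL2 : MemLp Real.sin 2 μ := by
    rw [memLp_two_iff_integrable_sq continuous_sin.aestronglyMeasurable]
    exact hsin2int
  have hqint : IntegrableOn (fun t => (f' t / Real.sin t) ^ 2) (Set.Ioo a b) :=
    hint.mono_set hsub
  have hhmeas : AEStronglyMeasurable (fun t => f' t / Real.sin t) μ :=
    ((hcont.measurable.div Real.measurable_sin)).aestronglyMeasurable
  have hhL2 : MemLp (fun t => f' t / Real.sin t) 2 μ := by
    rw [memLp_two_iff_integrable_sq hhmeas]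
    exact hqint
  -- Cauchy–Schwarz
  have hcs := my_cs hgL2 hhL2
  rw [hcong]
  refine hcs.trans ?_
  -- bound the two factors
  have hb1 : ∫ t in Set.Ioo a b, Real.sin t ^ 2 ≤ π * Real.sin θ ^ 2 := by
    have hmono : ∫ t in Set.Ioo a b, Real.sin t ^ 2 ≤
        ∫ _t in Set.Ioo a b, Real.sin θ ^ 2 := by
      refine setIntegral_mono_on hsin2int
        (integrableOn_const measure_Ioo_lt_top.ne) measurableSet_Ioo
        (fun t ht => ?_)
      have h1 := (hsin t ht).1
      have h2 := (hsin t ht).2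
      nlinarith
    have hconst : ∫ _t in Set.Ioo a b, Real.sin θ ^ 2 = (b - a) * Real.sin θ ^ 2 := by
      rw [setIntegral_const, Measure.real, Real.volume_Ioo, ENNReal.toReal_ofReal (by linarith), smul_eq_mul]
    refine hmono.trans ?_
    rw [hconst]
    nlinarith [sq_nonneg (Real.sin θ)]
  have hb2 : ∫ t in Set.Ioo a b, (f' t / Real.sin t) ^ 2 ≤ I := by
    refine setIntegral_mono_set hint
      (Filter.Eventually.of_forall fun x => sq_nonneg _)
      (HasSubset.Subset.eventuallyLE hsub)
  have hf1 : Real.sqrt (∫ t in Set.Ioo a b, Real.sin t ^ 2) ≤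
      Real.sqrt π * Real.sin θ := by
    have := Real.sqrt_le_sqrt hb1
    refine this.trans ?_
    rw [Real.sqrt_mul Real.pi_pos.le, Real.sqrt_sq hθnn]
  have hf2 : Real.sqrt (∫ t in Set.Ioo a b, (f' t / Real.sin t) ^ 2) ≤ Real.sqrt I :=
    Real.sqrt_le_sqrt hb2
  calc Real.sqrt (∫ t in Set.Ioo a b, Real.sin t ^ 2) *
        Real.sqrt (∫ t in Set.Ioo a b, (f' t / Real.sin t) ^ 2)
      ≤ (Real.sqrt π * Real.sin θ) * Real.sqrt I := by
        exact mul_le_mul hf1 hf2 (Real.sqrt_nonneg _)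
          (by positivity)
    _ = Real.sqrt π * Real.sin θ * Real.sqrt I := by ring

/-- Hardy-type inequality: there is a constant `C > 0` such that every continuously
differentiable, odd, `2π`-periodic function `f` with `f(0) = f(π) = 0` whose weighted
derivative `f′/sin` is square-integrable on `(−π, π)` satisfies
`|f(θ)/sin θ| ≤ C·‖f′/sin‖_{L²(−π,π)}` for all `θ` with `sin θ ≠ 0`. -/
theorem hardy_type_inequality :
    ∃ C : ℝ, 0 < C ∧
      ∀ f f' : ℝ → ℝ,
        (∀ x, HasDerivAt f (f' x) x) →
        Continuous f' →
        (∀ x, f (-x) = -f x) →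
        Function.Periodic f (2 * π) →
        f 0 = 0 → f π = 0 →
        IntegrableOn (fun ϑ => (f' ϑ / sin ϑ) ^ 2) (Set.Ioo (-π) π) →
        ∀ θ : ℝ, sin θ ≠ 0 →
          |f θ / sin θ| ≤ C * Real.sqrt (∫ ϑ in Set.Ioo (-π) π, (f' ϑ / sin ϑ) ^ 2) := by
  refine ⟨Real.sqrt π, Real.sqrt_pos.mpr Real.pi_pos, ?_⟩
  intro f f' hderiv hcont hodd hper hf0 hfπ hint
  set I := ∫ ϑ in Set.Ioo (-π) π, (f' ϑ / sin ϑ) ^ 2 with hIdef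
  -- key estimate on (0, π)
  have key : ∀ θ ∈ Set.Ioo (0:ℝ) π, |f θ| ≤ Real.sqrt π * sin θ * Real.sqrt I := by
    intro θ hθ
    have hsθ : 0 < sin θ := Real.sin_pos_of_pos_of_lt_pi hθ.1 hθ.2
    rcases le_or_gt θ (π / 2) with hle | hgt
    · -- integrate from 0
      have hFTC : ∫ t in Set.Ioo 0 θ, f' t = f θ := by
        have h1 : ∫ t in (0:ℝ)..θ, f' t = f θ - f 0 :=
          intervalIntegral.integral_eq_sub_of_hasDerivAt (fun x _ => hderiv x)
            (hcont.intervalIntegrable 0 θ)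
        rw [hf0, sub_zero] at h1
        rw [← MeasureTheory.integral_Ioc_eq_integral_Ioo,
          ← intervalIntegral.integral_of_le hθ.1.le, h1]
      have hsub : Set.Ioo (0:ℝ) θ ⊆ Set.Ioo (-π) π := by
        intro t ht
        exact ⟨by nlinarith [Real.pi_pos, ht.1], lt_trans ht.2 hθ.2⟩
      have hseg := hardy_seg f' hcont hθ.1.le (by linarith [hθ.2]) hsub hsθ.le
        (fun t ht => ⟨Real.sin_pos_of_pos_of_lt_pi ht.1 (lt_trans ht.2 hθ.2),
          Real.sin_le_sin_of_le_of_le_pi_div_two (by linarith [ht.1, Real.pi_pos]) hle ht.2.le⟩)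
        hint
      rwa [hFTC] at hseg
    · -- integrate from π
      have hFTC : ∫ t in Set.Ioo θ π, f' t = -f θ := by
        have h1 : ∫ t in θ..π, f' t = f π - f θ :=
          intervalIntegral.integral_eq_sub_of_hasDerivAt (fun x _ => hderiv x)
            (hcont.intervalIntegrable θ π)
        rw [hfπ, zero_sub] at h1
        rw [← MeasureTheory.integral_Ioc_eq_integral_Ioo,
          ← intervalIntegral.integral_of_le hθ.2.le, h1]
      have hsub : Set.Ioo θ π ⊆ Set.Ioo (-π) π := by
        intro t ht
        exact ⟨by nlinarith [Real.pi_pos, hθ.1, ht.1], ht.2⟩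
      have hseg := hardy_seg f' hcont hθ.2.le (by linarith [hθ.1]) hsub hsθ.le
        (fun t ht => by
          have hpos : 0 < sin t :=
            Real.sin_pos_of_pos_of_lt_pi (lt_trans hθ.1 ht.1) ht.2
          refine ⟨hpos, ?_⟩
          have h1 : Real.sin (π - t) ≤ Real.sin (π - θ) := by
            refine Real.sin_le_sin_of_le_of_le_pi_div_two ?_ ?_ ?_
            · nlinarith [ht.2, Real.pi_pos]
            · linarith [hgt]
            · linarith [ht.1]
          rwa [Real.sin_pi_sub, Real.sin_pi_sub] at h1)
        hint
      rw [hFTC, abs_neg] at hseg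
      exact hseg
  -- reduction of an arbitrary θ to (0, π)
  intro θ hθs
  obtain ⟨θ', hθ', heq⟩ : ∃ θ', θ' ∈ Set.Ioo (0:ℝ) π ∧ f θ / sin θ = f θ' / sin θ' := by
    have h2π : (0:ℝ) < 2 * π := by positivity
    set n := ⌊θ / (2 * π)⌋ with hn
    set θ₀ := θ - n * (2 * π) with hθ₀
    have hfθ₀ : f θ₀ = f θ := hper.sub_int_mul_eq n
    have hsθ₀ : sin θ₀ = sin θ := Real.sin_periodic.sub_int_mul_eq n
    have h0le : 0 ≤ θ₀ := Int.sub_floor_div_mul_nonneg θ h2π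
    have hlt : θ₀ < 2 * π := Int.sub_floor_div_mul_lt θ h2π
    have hne0 : θ₀ ≠ 0 := by
      intro h
      rw [h] at hsθ₀
      simp at hsθ₀
      exact hθs hsθ₀.symm
    have hneπ : θ₀ ≠ π := by
      intro h
      rw [h] at hsθ₀
      simp at hsθ₀
      exact hθs hsθ₀.symm
    have h0pos : 0 < θ₀ := lt_of_le_of_ne h0le (Ne.symm hne0)
    rcases lt_or_gt_of_ne hneπ with hltπ | hgtπ
    · exact ⟨θ₀, ⟨h0pos, hltπ⟩, by rw [hfθ₀, hsθ₀]⟩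
    · refine ⟨2 * π - θ₀, ⟨by linarith, by linarith⟩, ?_⟩
      have hfval : f (2 * π - θ₀) = -f θ₀ := by
        have h1 : f (2 * π - θ₀) = f (-(θ₀ - 2 * π)) := by ring_nf
        rw [h1, hodd (θ₀ - 2 * π), hper.sub_eq θ₀]
      have hsval : sin (2 * π - θ₀) = -sin θ₀ := by
        have h1 : (2 * π - θ₀) = -(θ₀ - 2 * π) := by ring
        rw [h1, Real.sin_neg, Real.sin_periodic.sub_eq θ₀]
      rw [hfval, hsval, neg_div_neg_eq, hfθ₀, hsθ₀]
  rw [heq]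
  have hsθ' : 0 < sin θ' := Real.sin_pos_of_pos_of_lt_pi hθ'.1 hθ'.2
  rw [abs_div, abs_of_pos hsθ', div_le_iff₀ hsθ']
  calc |f θ'| ≤ Real.sqrt π * sin θ' * Real.sqrt I := key θ' hθ'
    _ = Real.sqrt π * Real.sqrt I * sin θ' := by ring
end

section
/- Let C₁, C₂ > 0, let I₀ > 0, and set T₀ := (1/C₁)·log(1 + C₁/(2·C₂·I₀)). Let I : [0, T₀] → ℝ be differentiable with I(t) ≥ 0 and I′(t) ≤ C₁·I(t) + C₂·I(t)² for all t ∈ [0, T₀], and I(0) = I₀. Then for every t ∈ [0, T₀] one has I(t) ≤ 2·I₀·e^{C₁·t}. -/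
open Real Set

/-- Abstract comparison lemma: if `f′ ≤ C₁f + C₂f²`, `B` solves the Riccati ODE
`B′ = C₁B + C₂B²` on `[0,T₀]`, `B ≤ M` there, and `f 0 ≤ B 0`, then `f ≤ B` on `[0,T₀]`. -/
theorem riccati_aux_compare (C₁ C₂ M T₀ : ℝ) (hC₁ : 0 < C₁) (hC₂ : 0 < C₂)
    (hT : 0 ≤ T₀) (hM : 0 ≤ M) (f f' B B' : ℝ → ℝ)
    (hfc : ContinuousOn f (Icc 0 T₀))
    (hf' : ∀ x ∈ Ico (0:ℝ) T₀, HasDerivWithinAt f (f' x) (Ici x) x)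
    (hB : ∀ x ∈ Icc (0:ℝ) T₀, HasDerivAt B (B' x) x)
    (hBode : ∀ x ∈ Icc (0:ℝ) T₀, B' x = C₁ * B x + C₂ * B x ^ 2)
    (hBM : ∀ x ∈ Icc (0:ℝ) T₀, B x ≤ M)
    (h0 : f 0 ≤ B 0)
    (hineq : ∀ x ∈ Icc (0:ℝ) T₀, f' x ≤ C₁ * f x + C₂ * f x ^ 2) :
    ∀ t ∈ Icc (0:ℝ) T₀, f t ≤ B t := by
  obtain ⟨K, hK⟩ : ∃ K : ℝ, K = C₁ + C₂ * (2 * M + 1) + 1 := ⟨_, rfl⟩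
  have hKpos : 0 < K := by rw [hK]; positivity
  -- the ε-perturbed comparison
  have key : ∀ ε : ℝ, 0 < ε → ε * Real.exp (K * T₀) ≤ 1 →
      ∀ t ∈ Icc (0:ℝ) T₀, f t ≤ B t + ε * Real.exp (K * t) := by
    intro ε hε hεK
    have hBε : ∀ x ∈ Icc (0:ℝ) T₀,
        HasDerivAt (fun t => B t + ε * Real.exp (K * t))
          (B' x + ε * (K * Real.exp (K * x))) x := by
      intro x hx
      have h1 := (Real.hasDerivAt_exp (K * x)).comp x ((hasDerivAt_id x).const_mul K)
      have h2 : HasDerivAt (fun t => ε * Real.exp (K * t)) (ε * (K * Real.exp (K * x))) x := by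
        simpa [mul_comm, mul_assoc, mul_left_comm] using h1.const_mul ε
      exact (hB x hx).add h2
    have res := image_le_of_deriv_right_lt_deriv_boundary' (f := f) (f' := f')
      (a := 0) (b := T₀) (B := fun t => B t + ε * Real.exp (K * t))
      (B' := fun t => B' t + ε * (K * Real.exp (K * t)))
      hfc hf'
      (by
        show f 0 ≤ B 0 + ε * Real.exp (K * 0)
        have : 0 < ε * Real.exp (K * 0) := by positivity
        linarith)
      (fun x hx => ((hBε x hx).continuousAt).continuousWithinAt)
      (fun x hx => (hBε x ⟨hx.1, hx.2.le⟩).hasDerivWithinAt)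
      ?_
    · exact fun t ht => res ht
    · intro x hx hfx
      have hxIcc : x ∈ Icc (0:ℝ) T₀ := ⟨hx.1, hx.2.le⟩
      have hfx' : f x = B x + ε * Real.exp (K * x) := hfx
      have h1 : f' x ≤ C₁ * (B x + ε * Real.exp (K * x)) +
          C₂ * (B x + ε * Real.exp (K * x)) ^ 2 := by
        have := hineq x hxIcc
        rw [hfx'] at this
        exact this
      show f' x < B' x + ε * (K * Real.exp (K * x))
      rw [hBode x hxIcc]
      have hBx := hBM x hxIcc
      have hepos : 0 < Real.exp (K * x) := Real.exp_pos _
      have heK : ε * Real.exp (K * x) ≤ 1 := by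
        have h3 : Real.exp (K * x) ≤ Real.exp (K * T₀) :=
          Real.exp_le_exp.2 (mul_le_mul_of_nonneg_left hx.2.le hKpos.le)
        nlinarith
      have hKx : C₁ + C₂ * (2 * B x + ε * Real.exp (K * x)) < K := by
        have e1 : C₂ * B x ≤ C₂ * M := mul_le_mul_of_nonneg_left hBx hC₂.le
        have e2 : C₂ * (ε * Real.exp (K * x)) ≤ C₂ * 1 := mul_le_mul_of_nonneg_left heK hC₂.le
        have := hK.le; have := hK.ge
        nlinarith
      have h2 : ε * Real.exp (K * x) * (C₁ + C₂ * (2 * B x + ε * Real.exp (K * x)))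
          < ε * Real.exp (K * x) * K :=
        mul_lt_mul_of_pos_left hKx (by positivity)
      nlinarith [h2, h1]
  -- let ε → 0
  intro t ht
  by_contra h
  push_neg at h
  obtain ⟨ε, hε⟩ : ∃ ε : ℝ, ε = min (Real.exp (-(K * T₀)))
      ((f t - B t) / (2 * Real.exp (K * T₀))) := ⟨_, rfl⟩
  have hεpos : 0 < ε := by
    rw [hε]
    apply lt_min (Real.exp_pos _)
    apply div_pos (by linarith) (by positivity)
  have hεK : ε * Real.exp (K * T₀) ≤ 1 := by
    have h1 : ε ≤ Real.exp (-(K * T₀)) := hε ▸ min_le_left _ _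
    have hp := Real.exp_pos (K * T₀)
    calc ε * Real.exp (K * T₀) ≤ Real.exp (-(K * T₀)) * Real.exp (K * T₀) := by nlinarith
      _ = 1 := by rw [← Real.exp_add]; simp
  have h2 := key ε hεpos hεK t ht
  have h3 : Real.exp (K * t) ≤ Real.exp (K * T₀) :=
    Real.exp_le_exp.2 (mul_le_mul_of_nonneg_left ht.2 hKpos.le)
  have h4 : ε ≤ (f t - B t) / (2 * Real.exp (K * T₀)) := hε ▸ min_le_right _ _
  have hp := Real.exp_pos (K * T₀)
  rw [le_div_iff₀ (by positivity)] at h4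
  have := Real.exp_pos (K * t)
  nlinarith

/-- Riccati-type differential inequality bound: if `I′ ≤ C₁I + C₂I²` on `[0, T₀]` with
`I ≥ 0`, `I(0) = I₀ > 0` and `T₀ = (1/C₁)·log(1 + C₁/(2C₂I₀))`, then
`I(t) ≤ 2I₀·e^{C₁t}` on `[0, T₀]`. -/
theorem riccati_inequality_bound
    (C₁ C₂ I₀ : ℝ) (hC₁ : 0 < C₁) (hC₂ : 0 < C₂) (hI₀ : 0 < I₀)
    (T₀ : ℝ) (hT₀ : T₀ = (1 / C₁) * Real.log (1 + C₁ / (2 * C₂ * I₀)))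
    (I I' : ℝ → ℝ)
    (hderiv : ∀ t ∈ Icc (0 : ℝ) T₀, HasDerivWithinAt I (I' t) (Icc (0 : ℝ) T₀) t)
    (hnonneg : ∀ t ∈ Icc (0 : ℝ) T₀, 0 ≤ I t)
    (hineq : ∀ t ∈ Icc (0 : ℝ) T₀, I' t ≤ C₁ * I t + C₂ * (I t) ^ 2)
    (hinit : I 0 = I₀) :
    ∀ t ∈ Icc (0 : ℝ) T₀, I t ≤ 2 * I₀ * Real.exp (C₁ * t) := by
  have hApos : (0 : ℝ) < 1 + C₁ / (2 * C₂ * I₀) := by positivity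
  have hET : Real.exp (C₁ * T₀) = 1 + C₁ / (2 * C₂ * I₀) := by
    have h : C₁ * T₀ = Real.log (1 + C₁ / (2 * C₂ * I₀)) := by rw [hT₀]; field_simp
    rw [h, Real.exp_log hApos]
  have hT₀nn : 0 ≤ T₀ := by
    rw [hT₀]
    apply mul_nonneg (by positivity)
    apply Real.log_nonneg
    have : 0 < C₁ / (2 * C₂ * I₀) := by positivity
    linarith
  -- positivity of the denominator
  have hDge : ∀ t ∈ Icc (0:ℝ) T₀, C₁ / 2 ≤ C₁ + C₂ * I₀ * (1 - Real.exp (C₁ * t)) := by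
    intro t ht
    have hEle : Real.exp (C₁ * t) ≤ Real.exp (C₁ * T₀) :=
      Real.exp_le_exp.2 (mul_le_mul_of_nonneg_left ht.2 hC₁.le)
    rw [hET] at hEle
    have h1 : C₂ * I₀ * (Real.exp (C₁ * t) - 1) ≤ C₂ * I₀ * (C₁ / (2 * C₂ * I₀)) := by
      apply mul_le_mul_of_nonneg_left _ (by positivity)
      linarith
    have h2 : C₂ * I₀ * (C₁ / (2 * C₂ * I₀)) = C₁ / 2 := by field_simp
    nlinarith
  have hDpos : ∀ t ∈ Icc (0:ℝ) T₀, 0 < C₁ + C₂ * I₀ * (1 - Real.exp (C₁ * t)) :=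
    fun t ht => lt_of_lt_of_le (by linarith) (hDge t ht)
  -- the explicit Riccati solution and its derivative
  have hBderiv : ∀ t ∈ Icc (0:ℝ) T₀,
      HasDerivAt (fun t => C₁ * I₀ * Real.exp (C₁ * t) /
          (C₁ + C₂ * I₀ * (1 - Real.exp (C₁ * t))))
        (C₁ ^ 2 * I₀ * (C₁ + C₂ * I₀) * Real.exp (C₁ * t) /
          (C₁ + C₂ * I₀ * (1 - Real.exp (C₁ * t))) ^ 2) t := by
    intro t ht
    have hDt := (hDpos t ht).ne'
    have he := (Real.hasDerivAt_exp (C₁ * t)).comp t ((hasDerivAt_id t).const_mul C₁)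
    have hN : HasDerivAt (fun t => C₁ * I₀ * Real.exp (C₁ * t))
        (C₁ * I₀ * (C₁ * Real.exp (C₁ * t))) t := by
      simpa [mul_comm, mul_assoc, mul_left_comm] using he.const_mul (C₁ * I₀)
    have hDd : HasDerivAt (fun t => C₁ + C₂ * I₀ * (1 - Real.exp (C₁ * t)))
        (C₂ * I₀ * (-(C₁ * Real.exp (C₁ * t)))) t := by
      have h2 : HasDerivAt (fun t => 1 - Real.exp (C₁ * t)) (-(C₁ * Real.exp (C₁ * t))) t := by
        exact ((hasDerivAt_const t (1:ℝ)).sub he).congr_deriv (by ring)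
      simpa [mul_comm, mul_assoc, mul_left_comm] using (h2.const_mul (C₂ * I₀)).const_add C₁
    have := hN.div hDd hDt
    exact this.congr_deriv (by rw [div_left_inj' (pow_ne_zero 2 hDt)]; ring)
  -- B ≤ 2 I₀ e^{C₁ t} on [0,T₀]
  have hB2 : ∀ t ∈ Icc (0:ℝ) T₀,
      C₁ * I₀ * Real.exp (C₁ * t) / (C₁ + C₂ * I₀ * (1 - Real.exp (C₁ * t)))
        ≤ 2 * I₀ * Real.exp (C₁ * t) := by
    intro t ht
    have hDt := hDge t ht
    have hDt' := hDpos t ht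
    have hE' := Real.exp_pos (C₁ * t)
    rw [div_le_iff₀ hDt']
    nlinarith [mul_nonneg (by nlinarith : (0:ℝ) ≤ 2 * I₀ * Real.exp (C₁ * t))
      (by linarith : (0:ℝ) ≤ (C₁ + C₂ * I₀ * (1 - Real.exp (C₁ * t))) - C₁ / 2)]
  have hBM : ∀ t ∈ Icc (0:ℝ) T₀,
      C₁ * I₀ * Real.exp (C₁ * t) / (C₁ + C₂ * I₀ * (1 - Real.exp (C₁ * t)))
        ≤ 2 * I₀ * Real.exp (C₁ * T₀) := by
    intro t ht
    refine (hB2 t ht).trans ?_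
    have : Real.exp (C₁ * t) ≤ Real.exp (C₁ * T₀) :=
      Real.exp_le_exp.2 (mul_le_mul_of_nonneg_left ht.2 hC₁.le)
    nlinarith
  -- apply the abstract comparison lemma
  have main := riccati_aux_compare C₁ C₂ (2 * I₀ * Real.exp (C₁ * T₀)) T₀ hC₁ hC₂ hT₀nn
    (by positivity) I I'
    (fun t => C₁ * I₀ * Real.exp (C₁ * t) / (C₁ + C₂ * I₀ * (1 - Real.exp (C₁ * t))))
    (fun t => C₁ ^ 2 * I₀ * (C₁ + C₂ * I₀) * Real.exp (C₁ * t) /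
      (C₁ + C₂ * I₀ * (1 - Real.exp (C₁ * t))) ^ 2)
    (fun t ht => (hderiv t ht).continuousWithinAt)
    (by
      intro x hx
      apply (hderiv x ⟨hx.1, hx.2.le⟩).mono_of_mem_nhdsWithin
      apply Filter.mem_of_superset (inter_mem_nhdsWithin (Ici x) (Iio_mem_nhds hx.2))
      rintro y ⟨hy1, hy2⟩
      exact ⟨le_trans hx.1 hy1, hy2.le⟩)
    hBderiv
    (by
      intro x hx
      have hDx := (hDpos x hx).ne'
      show C₁ ^ 2 * I₀ * (C₁ + C₂ * I₀) * Real.exp (C₁ * x) /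
          (C₁ + C₂ * I₀ * (1 - Real.exp (C₁ * x))) ^ 2
        = C₁ * (C₁ * I₀ * Real.exp (C₁ * x) / (C₁ + C₂ * I₀ * (1 - Real.exp (C₁ * x))))
          + C₂ * (C₁ * I₀ * Real.exp (C₁ * x) / (C₁ + C₂ * I₀ * (1 - Real.exp (C₁ * x)))) ^ 2
      field_simp
      ring)
    hBM
    (by
      show I 0 ≤ C₁ * I₀ * Real.exp (C₁ * 0) / (C₁ + C₂ * I₀ * (1 - Real.exp (C₁ * 0)))
      rw [hinit]
      simp [hC₁.ne'])
    hineq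
  intro t ht
  exact (main t ht).trans (hB2 t ht)
end

section
/- Let C > 0 and let y : [0, ∞) → ℝ be differentiable with y(t) ≥ 0 and y′(t) ≤ −y(t) + C·y(t)^{3/2} for all t ≥ 0, and suppose y(0) ≤ 1/(4·C²). Then y(t) ≤ y(0)·e^{−t/2} for all t ≥ 0. -/
open Real Set

/-- Grönwall-type bootstrap lemma: if `y ≥ 0` satisfies `y′ ≤ −y + C·y^{3/2}` on `[0, ∞)`
and `y(0) ≤ 1/(4C²)`, then `y(t) ≤ y(0)·e^{−t/2}` for all `t ≥ 0`. -/
theorem bootstrap_decay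
    (C : ℝ) (hC : 0 < C)
    (y y' : ℝ → ℝ)
    (hderiv : ∀ t, 0 ≤ t → HasDerivWithinAt y (y' t) (Ici (0 : ℝ)) t)
    (hnonneg : ∀ t, 0 ≤ t → 0 ≤ y t)
    (hineq : ∀ t, 0 ≤ t → y' t ≤ -y t + C * (y t) ^ ((3 : ℝ) / 2))
    (hinit : y 0 ≤ 1 / (4 * C ^ 2)) :
    ∀ t, 0 ≤ t → y t ≤ y 0 * Real.exp (-t / 2) := by
  set M : ℝ := 1 / (4 * C ^ 2) with hM
  have hMpos : 0 < M := by positivity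
  have hsqrtM : Real.sqrt M = 1 / (2 * C) := by
    rw [hM, show (4 : ℝ) * C ^ 2 = (2 * C) ^ 2 by ring, one_div, Real.sqrt_inv,
      Real.sqrt_sq (by positivity)]
    rw [one_div]
  -- key algebraic estimate
  have hkey : ∀ z : ℝ, 0 ≤ z → z ≤ M → C * z ^ ((3 : ℝ) / 2) ≤ z / 2 := by
    intro z hz hzM
    rcases eq_or_lt_of_le hz with h0 | h0
    · rw [← h0, Real.zero_rpow (by norm_num)]; norm_num
    · have hdecomp : z ^ ((3 : ℝ) / 2) = z * Real.sqrt z := by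
        rw [show (3 : ℝ) / 2 = 1 + 1 / 2 by norm_num, Real.rpow_add h0,
          Real.rpow_one, Real.sqrt_eq_rpow]
      have hs : Real.sqrt z ≤ 1 / (2 * C) := by
        rw [← hsqrtM]; exact Real.sqrt_le_sqrt hzM
      have : C * (z * Real.sqrt z) ≤ C * (z * (1 / (2 * C))) := by
        apply mul_le_mul_of_nonneg_left _ hC.le
        exact mul_le_mul_of_nonneg_left hs hz
      rw [hdecomp]
      calc C * (z * Real.sqrt z) ≤ C * (z * (1 / (2 * C))) := this
        _ = z / 2 := by field_simp
  -- Stage 1: y t ≤ M for all t ≥ 0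
  have stage1 : ∀ t, 0 ≤ t → y t ≤ M := by
    intro t ht
    have := image_le_of_deriv_right_lt_deriv_boundary
      (f := y) (f' := y') (a := 0) (b := t)
      (fun s hs => (hderiv s hs.1).continuousWithinAt.mono Icc_subset_Ici_self)
      (fun x hx => (hderiv x hx.1).mono (Ici_subset_Ici.2 hx.1))
      (B := fun _ => M) (B' := fun _ => 0) hinit
      (fun x => hasDerivAt_const x M)
      (fun x hx hyx => by
        have h1 := hineq x hx.1
        have h2 := hkey (y x) (hnonneg x hx.1) hyx.le
        have h3 : y' x ≤ -(y x) + y x / 2 := by linarith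
        rw [hyx] at h3
        show y' x < 0
        linarith)
    exact this (right_mem_Icc.2 ht)
  -- consequence: y' t ≤ - y t / 2
  have hhalf : ∀ t, 0 ≤ t → y' t ≤ -(y t) / 2 := by
    intro t ht
    have h1 := hineq t ht
    have h2 := hkey (y t) (hnonneg t ht) (stage1 t ht)
    linarith
  -- Stage 2: g t = y t * exp (t/2) is antitone on Ici 0
  set g : ℝ → ℝ := fun t => y t * Real.exp (t / 2) with hg
  have hgderiv : ∀ t : ℝ, 0 < t →
      HasDerivAt g (y' t * Real.exp (t / 2) + y t * (Real.exp (t / 2) * (1 / 2))) t := by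
    intro t ht
    have hy : HasDerivAt y (y' t) t :=
      (hderiv t ht.le).hasDerivAt (Ici_mem_nhds ht)
    have he : HasDerivAt (fun s : ℝ => Real.exp (s / 2)) (Real.exp (t / 2) * (1 / 2)) t := by
      have : HasDerivAt (fun s : ℝ => s / 2) (1 / 2) t := by
        simpa using (hasDerivAt_id t).div_const 2
      simpa using this.exp
    exact hy.mul he
  have hanti : AntitoneOn g (Ici (0 : ℝ)) := by
    apply antitoneOn_of_deriv_nonpos (convex_Ici 0)
    · exact fun s hs => ((hderiv s hs).continuousWithinAt).mul
        (Real.continuous_exp.comp (continuous_id.div_const 2)).continuousWithinAt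
    · intro s hs
      rw [interior_Ici] at hs
      exact (hgderiv s hs).differentiableAt.differentiableWithinAt
    · intro s hs
      rw [interior_Ici] at hs
      rw [(hgderiv s hs).deriv]
      have h1 := hhalf s hs.le
      have h2 : (0 : ℝ) < Real.exp (s / 2) := Real.exp_pos _
      nlinarith
  intro t ht
  have h := hanti (self_mem_Ici) ht ht
  simp only [hg] at h
  have hexp : Real.exp (0 / 2) = 1 := by norm_num
  rw [hexp, mul_one] at h
  have hpos : (0 : ℝ) < Real.exp (-t / 2) := Real.exp_pos _
  have := mul_le_mul_of_nonneg_right h hpos.le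
  have hone : Real.exp (t / 2) * Real.exp (-t / 2) = 1 := by
    rw [← Real.exp_add, show t / 2 + -t / 2 = 0 by ring, Real.exp_zero]
  calc y t = y t * (Real.exp (t / 2) * Real.exp (-t / 2)) := by rw [hone, mul_one]
    _ = y t * Real.exp (t / 2) * Real.exp (-t / 2) := by ring
    _ ≤ y 0 * Real.exp (-t / 2) := this
end
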